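/- Let (Ȳ,Z̄,V) be random variables over finite alphabets with joint pmf p'(ȳ,v)·∏_{m=1}^{M'} q'_m(z_m|y_m). Then for every m with 1 ≤ m < M': I(Ȳ_{{m+1,…,M'}};Z̄_{{m+1,…,M'}}|Z̄_{{1,…,m}},V) = Σ_{i=m+1}^{M'} I(Y_i;Z_i|Z̄_{{1,…,i−1}},V). -/

import Mathlib

open Finset
open scoped Classical

noncomputable section

/-- The distribution (pmf) of the random variable `X` under the pmf `P` on the finite
sample space `Ω`. -/
def dist {Ω α : Type*} [Fintype Ω] [Fintype α] (P : Ω → ℝ) (X : Ω → α) (a : α) : ℝ :=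
  ∑ ω, if X ω = a then P ω else 0

/-- Shannon entropy (base 2) of the random variable `X` under the pmf `P`. -/
def Hent {Ω α : Type*} [Fintype Ω] [Fintype α] (P : Ω → ℝ) (X : Ω → α) : ℝ :=
  -∑ a, dist P X a * Real.logb 2 (dist P X a)

/-- Conditional entropy `H(X | Y)`. -/
def condEnt {Ω α β : Type*} [Fintype Ω] [Fintype α] [Fintype β]
    (P : Ω → ℝ) (X : Ω → α) (Y : Ω → β) : ℝ :=
  Hent P (fun ω => (X ω, Y ω)) - Hent P Y

/-- Conditional mutual information `I(X ; Y | Z)`. -/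
def condMI {Ω α β γ : Type*} [Fintype Ω] [Fintype α] [Fintype β] [Fintype γ]
    (P : Ω → ℝ) (X : Ω → α) (Y : Ω → β) (Z : Ω → γ) : ℝ :=
  Hent P (fun ω => (X ω, Z ω)) + Hent P (fun ω => (Y ω, Z ω))
    - Hent P (fun ω => (X ω, Y ω, Z ω)) - Hent P Z

/-- The ε-strongly typical set condition for a sequence `xs` with respect to pmf `p`:
`|N(a|xs)/n − p(a)| < ε/|α|` for every letter `a`. -/
def StronglyTypical {α : Type*} [Fintype α] (p : α → ℝ) {n : ℕ} (xs : Fin n → α)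
    (ε : ℝ) : Prop :=
  ∀ a : α, |((Finset.univ.filter fun k => xs k = a).card : ℝ) / n - p a|
    < ε / Fintype.card α

section YZV

variable {M' : ℕ}

/-- Canonical sample space for `(Ȳ, Z̄, V)`. -/
abbrev Samp (𝒴 𝒵 : Fin M' → Type*) (V : Type*) : Type _ :=
  (∀ i, 𝒴 i) × (∀ i, 𝒵 i) × V

variable {𝒴 𝒵 : Fin M' → Type*} [∀ i, Fintype (𝒴 i)] [∀ i, Fintype (𝒵 i)]
  {V : Type*} [Fintype V]

/-- The joint pmf `p'(ȳ,v) · ∏ₘ q'ₘ(zₘ | yₘ)` on the canonical sample space: conditionally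
on `(Ȳ,V)` the `Zₘ` are mutually independent and `Zₘ` depends only on `Yₘ`. -/
def Pjoint (p' : (∀ i, 𝒴 i) × V → ℝ) (q : ∀ m, 𝒴 m → 𝒵 m → ℝ) :
    Samp 𝒴 𝒵 V → ℝ :=
  fun ω => p' (ω.1, ω.2.2) * ∏ m, q m (ω.1 m) (ω.2.1 m)

/-- `Ȳ_I`. -/
def Ybar (I : Finset (Fin M')) : Samp 𝒴 𝒵 V → (∀ i : I, 𝒴 i.1) := fun ω i => ω.1 i.1

/-- `Z̄_I`. -/
def Zbar (I : Finset (Fin M')) : Samp 𝒴 𝒵 V → (∀ i : I, 𝒵 i.1) := fun ω i => ω.2.1 i.1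

/-- The pair `(Z̄_I, V)` used as a conditioning variable. -/
def ZbarV (I : Finset (Fin M')) : Samp 𝒴 𝒵 V → (∀ i : I, 𝒵 i.1) × V :=
  fun ω => (fun i => ω.2.1 i.1, ω.2.2)

/-- Membership in the region `B*`: `I(Ȳ_I; Z̄_I | Z̄_{Iᶜ}, V) ≤ Σ_{i∈I} R_i` for every
nonempty `I ⊆ {1,…,M'}`. -/
def memBstar (p' : (∀ i, 𝒴 i) × V → ℝ) (q : ∀ m, 𝒴 m → 𝒵 m → ℝ)
    (R : Fin M' → ℝ) : Prop :=
  ∀ I : Finset (Fin M'), I.Nonempty →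
    condMI (Pjoint p' q) (Ybar I) (Zbar I) (ZbarV Iᶜ) ≤ ∑ i ∈ I, R i

end YZV


section Aux

set_option linter.unusedSectionVars false
set_option linter.unusedVariables false

lemma Hent_eq_sum_omega' {Ω α : Type*} [Fintype Ω] [Fintype α] (P : Ω → ℝ) (X : Ω → α) :
    Hent P X = -∑ ω, P ω * Real.logb 2 (_root_.dist P X (X ω)) := by
  unfold Hent
  congr 1
  calc ∑ a, _root_.dist P X a * Real.logb 2 (_root_.dist P X a)
      = ∑ a, ∑ ω, (if X ω = a then P ω * Real.logb 2 (_root_.dist P X a) else 0) := by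
        refine Finset.sum_congr rfl fun a _ => ?_
        rw [show _root_.dist P X a = ∑ ω, if X ω = a then P ω else 0 from rfl, Finset.sum_mul]
        exact Finset.sum_congr rfl fun ω _ => by split <;> simp
    _ = ∑ ω, ∑ a, (if X ω = a then P ω * Real.logb 2 (_root_.dist P X a) else 0) :=
        Finset.sum_comm
    _ = ∑ ω, P ω * Real.logb 2 (_root_.dist P X (X ω)) := by
        refine Finset.sum_congr rfl fun ω _ => ?_
        simp

lemma Hent_congr {Ω α β : Type*} [Fintype Ω] [Fintype α] [Fintype β] (P : Ω → ℝ)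
    (X : Ω → α) (X' : Ω → β) (h : ∀ ω₁ ω₂, X ω₁ = X ω₂ ↔ X' ω₁ = X' ω₂) :
    Hent P X = Hent P X' := by
  rw [Hent_eq_sum_omega', Hent_eq_sum_omega']
  congr 1
  refine Finset.sum_congr rfl fun ω _ => ?_
  have : _root_.dist P X (X ω) = _root_.dist P X' (X' ω) := by
    refine Finset.sum_congr rfl fun ω' _ => ?_
    rw [if_congr (h ω' ω) rfl rfl]
  rw [this]

lemma le_dist_self {Ω α : Type*} [Fintype Ω] [Fintype α] {P : Ω → ℝ}
    (hP : ∀ ω, 0 ≤ P ω) (X : Ω → α) (ω : Ω) : P ω ≤ _root_.dist P X (X ω) := by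
  have := Finset.single_le_sum (f := fun ω' => if X ω' = X ω then P ω' else 0)
    (fun ω' _ => by split; exacts [hP ω', le_rfl]) (Finset.mem_univ ω)
  simpa [_root_.dist] using this

variable {M' : ℕ} {𝒴 𝒵 : Fin M' → Type} [∀ i, Fintype (𝒴 i)] [∀ i, Fintype (𝒵 i)]
  {V : Type} [Fintype V]

lemma sum_coord (i : Fin M')
    (f g : 𝒵 i → ℝ) (hfg : ∑ z, f z = ∑ z, g z)
    (F : (∀ j, 𝒵 j) → ℝ) (hF : ∀ zb zb', (∀ j, j ≠ i → zb j = zb' j) → F zb = F zb') :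
    ∑ zb, f (zb i) * F zb = ∑ zb, g (zb i) * F zb := by
  have key : ∀ h : 𝒵 i → ℝ, ∑ zb, h (zb i) * F zb
      = ∑ r : (∀ j : {j // j ≠ i}, 𝒵 j.1), ∑ a : 𝒵 i,
          h a * F ((Equiv.piSplitAt i 𝒵).symm (a, r)) := by
    intro h
    rw [← Equiv.sum_comp (Equiv.piSplitAt i 𝒵).symm (fun zb => h (zb i) * F zb),
      Fintype.sum_prod_type, Finset.sum_comm]
    refine Finset.sum_congr rfl fun r _ => Finset.sum_congr rfl fun a _ => ?_
    congr 1
    rw [Equiv.piSplitAt_symm_apply]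
    simp
  rw [key f, key g]
  refine Finset.sum_congr rfl fun r _ => ?_
  rcases isEmpty_or_nonempty (𝒵 i) with hE | hNE
  · simp
  · have a₀ : 𝒵 i := Classical.arbitrary _
    have hc : ∀ a : 𝒵 i, F ((Equiv.piSplitAt i 𝒵).symm (a, r))
        = F ((Equiv.piSplitAt i 𝒵).symm (a₀, r)) := by
      intro a
      refine hF _ _ fun j hj => ?_
      rw [Equiv.piSplitAt_symm_apply, Equiv.piSplitAt_symm_apply, dif_neg hj, dif_neg hj]
    calc ∑ a, f a * F ((Equiv.piSplitAt i 𝒵).symm (a, r))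
        = (∑ a, f a) * F ((Equiv.piSplitAt i 𝒵).symm (a₀, r)) := by
          rw [Finset.sum_mul]; exact Finset.sum_congr rfl fun a _ => by rw [hc a]
      _ = (∑ a, g a) * F ((Equiv.piSplitAt i 𝒵).symm (a₀, r)) := by rw [hfg]
      _ = _ := by
          rw [Finset.sum_mul]; exact Finset.sum_congr rfl fun a _ => by rw [hc a]

lemma sum_samp (f : Samp 𝒴 𝒵 V → ℝ) :
    ∑ ω, f ω = ∑ y, ∑ v, ∑ zb, f (y, zb, v) := by
  rw [Fintype.sum_prod_type]
  refine Finset.sum_congr rfl fun y _ => ?_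
  rw [Fintype.sum_prod_type, Finset.sum_comm]

variable (p' : (∀ i, 𝒴 i) × V → ℝ) (q : ∀ m, 𝒴 m → 𝒵 m → ℝ)

lemma dist_pairZ (hq1 : ∀ m y, ∑ z, q m y z = 1) (i : Fin M') {β : Type} [Fintype β]
    (W : Samp 𝒴 𝒵 V → β)
    (hW1 : ∀ ω ω' : Samp 𝒴 𝒵 V, ω.1 = ω'.1 → ω.2.2 = ω'.2.2 →
      (∀ j, j ≠ i → ω.2.1 j = ω'.2.1 j) → W ω = W ω')
    (hW2 : ∀ ω ω' : Samp 𝒴 𝒵 V, W ω = W ω' → ω.1 i = ω'.1 i)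
    (ω₀ : Samp 𝒴 𝒵 V) :
    _root_.dist (Pjoint p' q) (fun ω => (ω.2.1 i, W ω)) (ω₀.2.1 i, W ω₀)
      = _root_.dist (Pjoint p' q) W (W ω₀) * q i (ω₀.1 i) (ω₀.2.1 i) := by
  unfold _root_.dist Pjoint
  rw [sum_samp, sum_samp, Finset.sum_mul]
  refine Finset.sum_congr rfl fun y _ => ?_
  rw [Finset.sum_mul]
  refine Finset.sum_congr rfl fun v _ => ?_
  rw [Finset.sum_mul]
  set z₀ := ω₀.2.1 i
  set w₀ := W ω₀
  set y₀ := ω₀.1 i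
  set F : (∀ j, 𝒵 j) → ℝ := fun zb =>
    if W (y, zb, v) = w₀ then p' (y, v) * ∏ j ∈ Finset.univ.erase i, q j (y j) (zb j) else 0
    with hFdef
  have hF : ∀ zb zb', (∀ j, j ≠ i → zb j = zb' j) → F zb = F zb' := by
    intro zb zb' h
    have hW : W (y, zb, v) = W (y, zb', v) := hW1 _ _ rfl rfl (fun j hj => h j hj)
    have hprod : (∏ j ∈ Finset.univ.erase i, q j (y j) (zb j))
        = ∏ j ∈ Finset.univ.erase i, q j (y j) (zb' j) := by
      refine Finset.prod_congr rfl fun j hj => ?_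
      rw [h j (Finset.mem_erase.mp hj).1]
    simp only [hFdef, hW, hprod]
  trans ∑ zb, (if zb i = z₀ then q i (y i) (zb i) else 0) * F zb
  · refine Finset.sum_congr rfl fun zb _ => ?_
    by_cases h1 : zb i = z₀
    · by_cases h2 : W (y, zb, v) = w₀
      · have hc : ((zb i, W (y, zb, v)) : 𝒵 i × β) = (z₀, w₀) := by rw [h1, h2]
        rw [if_pos hc, if_pos h1]
        show p' (y, v) * ∏ m, q m (y m) (zb m) = q i (y i) (zb i) * F zb
        have hFv : F zb = p' (y, v) * ∏ j ∈ Finset.univ.erase i, q j (y j) (zb j) := by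
          simp only [hFdef]; rw [if_pos h2]
        rw [hFv, ← Finset.mul_prod_erase Finset.univ (fun j => q j (y j) (zb j))
          (Finset.mem_univ i)]
        ring
      · have hc : ¬(((zb i, W (y, zb, v)) : 𝒵 i × β) = (z₀, w₀)) := by
          simp [Prod.ext_iff, h2]
        rw [if_neg hc]
        have hFv : F zb = 0 := by simp only [hFdef]; rw [if_neg h2]
        rw [hFv, mul_zero]
    · have hc : ¬(((zb i, W (y, zb, v)) : 𝒵 i × β) = (z₀, w₀)) := by
        simp [Prod.ext_iff, h1]
      rw [if_neg hc, if_neg h1, zero_mul]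
  trans ∑ zb, (q i y₀ z₀ * q i (y i) (zb i)) * F zb
  · by_cases hy : y i = y₀
    · refine sum_coord i (fun a => if a = z₀ then q i (y i) a else 0)
        (fun a => q i y₀ z₀ * q i (y i) a) ?_ F hF
      rw [Finset.sum_ite_eq' Finset.univ z₀ (fun a => q i (y i) a), ← Finset.mul_sum,
        hq1, mul_one, if_pos (Finset.mem_univ z₀), hy]
    · have hF0 : ∀ zb, F zb = 0 := by
        intro zb
        by_cases h : W (y, zb, v) = w₀
        · exact absurd (hW2 (y, zb, v) ω₀ h) hy
        · simp only [hFdef]; rw [if_neg h]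
      simp only [hF0, mul_zero, Finset.sum_const_zero]
  · refine Finset.sum_congr rfl fun zb _ => ?_
    by_cases h2 : W (y, zb, v) = w₀
    · rw [if_pos h2]
      show (q i y₀ z₀ * q i (y i) (zb i)) * F zb
        = (p' (y, v) * ∏ m, q m (y m) (zb m)) * q i y₀ z₀
      have hFv : F zb = p' (y, v) * ∏ j ∈ Finset.univ.erase i, q j (y j) (zb j) := by
        simp only [hFdef]; rw [if_pos h2]
      rw [hFv, ← Finset.mul_prod_erase Finset.univ (fun j => q j (y j) (zb j))
        (Finset.mem_univ i)]
      ring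
    · rw [if_neg h2, zero_mul]
      have hFv : F zb = 0 := by simp only [hFdef]; rw [if_neg h2]
      rw [hFv, mul_zero]


def cC (i : Fin M') : ℝ :=
  -∑ y, _root_.dist (Pjoint p' q) (fun ω => ω.1 i) y *
    ∑ z, q i y z * Real.logb 2 (q i y z)

lemma sum_P_logq (hq1 : ∀ m y, ∑ z, q m y z = 1) (i : Fin M') :
    ∑ ω, Pjoint p' q ω * Real.logb 2 (q i (ω.1 i) (ω.2.1 i)) = - cC p' q i := by
  have hrhs : - cC p' q i
      = ∑ ω, Pjoint p' q ω * ∑ z, q i (ω.1 i) z * Real.logb 2 (q i (ω.1 i) z) := by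
    rw [cC, neg_neg]
    calc ∑ y, _root_.dist (Pjoint p' q) (fun ω => ω.1 i) y *
          ∑ z, q i y z * Real.logb 2 (q i y z)
        = ∑ y, ∑ ω, (if ω.1 i = y then
            Pjoint p' q ω * ∑ z, q i y z * Real.logb 2 (q i y z) else 0) := by
          refine Finset.sum_congr rfl fun a _ => ?_
          rw [show _root_.dist (Pjoint p' q) (fun ω => ω.1 i) a
            = ∑ ω, if ω.1 i = a then Pjoint p' q ω else 0 from rfl, Finset.sum_mul]
          exact Finset.sum_congr rfl fun ω _ => by split <;> simp
      _ = ∑ ω, ∑ y, (if ω.1 i = y then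
            Pjoint p' q ω * ∑ z, q i y z * Real.logb 2 (q i y z) else 0) :=
          Finset.sum_comm
      _ = _ := by
          refine Finset.sum_congr rfl fun ω _ => ?_
          simp
  rw [hrhs, sum_samp, sum_samp]
  refine Finset.sum_congr rfl fun y _ => Finset.sum_congr rfl fun v _ => ?_
  set F : (∀ j, 𝒵 j) → ℝ := fun zb =>
    p' (y, v) * ∏ j ∈ Finset.univ.erase i, q j (y j) (zb j) with hFdef
  have hF : ∀ zb zb', (∀ j, j ≠ i → zb j = zb' j) → F zb = F zb' := by
    intro zb zb' h
    simp only [hFdef]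
    congr 1
    exact Finset.prod_congr rfl fun j hj => by rw [h j (Finset.mem_erase.mp hj).1]
  have hP : ∀ zb : ∀ j, 𝒵 j, Pjoint p' q ((y, zb, v) : Samp 𝒴 𝒵 V)
      = q i (y i) (zb i) * F zb := by
    intro zb
    show p' (y, v) * ∏ m, q m (y m) (zb m) = _
    rw [hFdef, ← Finset.mul_prod_erase Finset.univ (fun j => q j (y j) (zb j))
      (Finset.mem_univ i)]
    ring
  calc ∑ zb, Pjoint p' q ((y, zb, v) : Samp 𝒴 𝒵 V) *
        Real.logb 2 (q i (y i) (zb i))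
      = ∑ zb, (q i (y i) (zb i) * Real.logb 2 (q i (y i) (zb i))) * F zb := by
        refine Finset.sum_congr rfl fun zb _ => ?_
        rw [hP zb]; ring
    _ = ∑ zb, (q i (y i) (zb i) *
          ∑ z, q i (y i) z * Real.logb 2 (q i (y i) z)) * F zb := by
        refine sum_coord i (fun a => q i (y i) a * Real.logb 2 (q i (y i) a))
          (fun a => q i (y i) a * ∑ z, q i (y i) z * Real.logb 2 (q i (y i) z)) ?_ F hF
        rw [← Finset.sum_mul, hq1, one_mul]
    _ = _ := by
        refine Finset.sum_congr rfl fun zb _ => ?_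
        rw [hP zb]; ring

lemma Pjoint_nonneg (hp'0 : ∀ yv, 0 ≤ p' yv) (hq0 : ∀ m y z, 0 ≤ q m y z)
    (ω : Samp 𝒴 𝒵 V) : 0 ≤ Pjoint p' q ω :=
  mul_nonneg (hp'0 _) (Finset.prod_nonneg fun j _ => hq0 _ _ _)

lemma Hent_pairZ (hp'0 : ∀ yv, 0 ≤ p' yv) (hq0 : ∀ m y z, 0 ≤ q m y z)
    (hq1 : ∀ m y, ∑ z, q m y z = 1) (i : Fin M') {β : Type} [Fintype β]
    (W : Samp 𝒴 𝒵 V → β)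
    (hW1 : ∀ ω ω' : Samp 𝒴 𝒵 V, ω.1 = ω'.1 → ω.2.2 = ω'.2.2 →
      (∀ j, j ≠ i → ω.2.1 j = ω'.2.1 j) → W ω = W ω')
    (hW2 : ∀ ω ω' : Samp 𝒴 𝒵 V, W ω = W ω' → ω.1 i = ω'.1 i) :
    Hent (Pjoint p' q) (fun ω => (ω.2.1 i, W ω)) = Hent (Pjoint p' q) W + cC p' q i := by
  rw [Hent_eq_sum_omega', Hent_eq_sum_omega']
  have key : ∀ ω : Samp 𝒴 𝒵 V,
      Pjoint p' q ω * Real.logb 2 (_root_.dist (Pjoint p' q)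
        (fun ω' => (ω'.2.1 i, W ω')) (ω.2.1 i, W ω))
      = Pjoint p' q ω * Real.logb 2 (_root_.dist (Pjoint p' q) W (W ω))
        + Pjoint p' q ω * Real.logb 2 (q i (ω.1 i) (ω.2.1 i)) := by
    intro ω
    rcases eq_or_ne (Pjoint p' q ω) 0 with h0 | h0
    · rw [h0]; ring
    · have hpos : 0 < Pjoint p' q ω := (Pjoint_nonneg p' q hp'0 hq0 ω).lt_of_ne' h0
      have hq_ne : q i (ω.1 i) (ω.2.1 i) ≠ 0 := by
        intro hq
        apply h0
        show p' (ω.1, ω.2.2) * ∏ m, q m (ω.1 m) (ω.2.1 m) = 0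
        rw [Finset.prod_eq_zero (Finset.mem_univ i) hq, mul_zero]
      have hd_ne : _root_.dist (Pjoint p' q) W (W ω) ≠ 0 :=
        ne_of_gt (lt_of_lt_of_le hpos
          (le_dist_self (Pjoint_nonneg p' q hp'0 hq0) W ω))
      rw [dist_pairZ p' q hq1 i W hW1 hW2 ω, Real.logb_mul hd_ne hq_ne]
      ring
  calc -∑ ω, Pjoint p' q ω * Real.logb 2 (_root_.dist (Pjoint p' q)
        (fun ω' => (ω'.2.1 i, W ω')) ((fun ω' => (ω'.2.1 i, W ω')) ω))
      = -∑ ω, (Pjoint p' q ω * Real.logb 2 (_root_.dist (Pjoint p' q) W (W ω))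
        + Pjoint p' q ω * Real.logb 2 (q i (ω.1 i) (ω.2.1 i))) := by
        rw [neg_inj]
        exact Finset.sum_congr rfl fun ω _ => key ω
    _ = (-∑ ω, Pjoint p' q ω * Real.logb 2 (_root_.dist (Pjoint p' q) W (W ω)))
        - ∑ ω, Pjoint p' q ω * Real.logb 2 (q i (ω.1 i) (ω.2.1 i)) := by
        rw [Finset.sum_add_distrib]; ring
    _ = _ := by rw [sum_P_logq p' q hq1 i]; ring


lemma pi_sub_eq_iff {κ : Type} (𝒲 : Fin M' → Type) (S : Finset (Fin M'))
    (f g : ∀ j : S, 𝒲 j.1) :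
    f = g ↔ ∀ j (h : j ∈ S), f ⟨j, h⟩ = g ⟨j, h⟩ := by
  rw [funext_iff]; exact Subtype.forall

lemma Ybar_eq_iff (S : Finset (Fin M')) (ω₁ ω₂ : Samp 𝒴 𝒵 V) :
    Ybar S ω₁ = Ybar S ω₂ ↔ ∀ j ∈ S, ω₁.1 j = ω₂.1 j := by
  unfold Ybar; rw [funext_iff]; exact Subtype.forall

lemma Zbar_eq_iff (S : Finset (Fin M')) (ω₁ ω₂ : Samp 𝒴 𝒵 V) :
    Zbar S ω₁ = Zbar S ω₂ ↔ ∀ j ∈ S, ω₁.2.1 j = ω₂.2.1 j := by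
  unfold Zbar; rw [funext_iff]; exact Subtype.forall

lemma ZbarV_fst_eq_iff (S : Finset (Fin M')) (ω₁ ω₂ : Samp 𝒴 𝒵 V) :
    (ZbarV S ω₁).1 = (ZbarV S ω₂).1 ↔ ∀ j ∈ S, ω₁.2.1 j = ω₂.2.1 j := by
  unfold ZbarV
  rw [funext_iff]
  exact Subtype.forall

lemma ZbarV_snd (S : Finset (Fin M')) (ω : Samp 𝒴 𝒵 V) : (ZbarV S ω).2 = ω.2.2 := rfl

lemma ZbarV_eq_iff (S : Finset (Fin M')) (ω₁ ω₂ : Samp 𝒴 𝒵 V) :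
    ZbarV S ω₁ = ZbarV S ω₂ ↔ (∀ j ∈ S, ω₁.2.1 j = ω₂.2.1 j) ∧ ω₁.2.2 = ω₂.2.2 := by
  unfold ZbarV
  rw [Prod.ext_iff]
  constructor
  · rintro ⟨h1, h2⟩
    exact ⟨fun j hj => congrFun h1 ⟨j, hj⟩, h2⟩
  · rintro ⟨h1, h2⟩
    exact ⟨funext fun j => h1 j.1 j.2, h2⟩

lemma Hchain (hp'0 : ∀ yv, 0 ≤ p' yv) (hq0 : ∀ m y z, 0 ≤ q m y z)
    (hq1 : ∀ m y, ∑ z, q m y z = 1) (T H : Finset (Fin M')) (hTH : ∀ i ∈ T, i ∉ H)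
    (S : Finset (Fin M')) : S ⊆ T →
    Hent (Pjoint p' q) (fun ω => (Ybar T ω, Zbar S ω, ZbarV H ω))
      = Hent (Pjoint p' q) (fun ω => (Ybar T ω, ZbarV H ω)) + ∑ i ∈ S, cC p' q i := by
  classical
  induction S using Finset.induction_on with
  | empty =>
    intro _
    rw [Finset.sum_empty, add_zero]
    refine Hent_congr _ _ _ fun ω₁ ω₂ => ?_
    have hz : Zbar (∅ : Finset (Fin M')) ω₁ = Zbar (∅ : Finset (Fin M')) ω₂ :=
      funext fun j => absurd j.2 (Finset.notMem_empty j.1)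
    constructor
    · intro h
      rw [Prod.ext_iff] at h ⊢
      rw [Prod.ext_iff] at h
      exact ⟨h.1, h.2.2⟩
    · intro h
      rw [Prod.ext_iff] at h ⊢
      exact ⟨h.1, by rw [Prod.ext_iff]; exact ⟨hz, h.2⟩⟩
  | @insert i S hiS ih =>
    intro hS
    have hiT : i ∈ T := hS (Finset.mem_insert_self i S)
    have hST : S ⊆ T := (Finset.subset_insert i S).trans hS
    rw [Finset.sum_insert hiS]
    have step1 : Hent (Pjoint p' q) (fun ω => (Ybar T ω, Zbar (insert i S) ω, ZbarV H ω))
        = Hent (Pjoint p' q)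
            (fun ω => (ω.2.1 i, ((Ybar T ω, Zbar S ω, ZbarV H ω) :
              (∀ j : T, 𝒴 j.1) × (∀ j : S, 𝒵 j.1) × ((∀ j : H, 𝒵 j.1) × V)))) := by
      refine Hent_congr _ _ _ fun ω₁ ω₂ => ?_
      show (Ybar T ω₁, Zbar (insert i S) ω₁, ZbarV H ω₁)
          = (Ybar T ω₂, Zbar (insert i S) ω₂, ZbarV H ω₂)
        ↔ ((ω₁.2.1 i, Ybar T ω₁, Zbar S ω₁, ZbarV H ω₁)
          = (ω₂.2.1 i, Ybar T ω₂, Zbar S ω₂, ZbarV H ω₂))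
      simp only [Prod.ext_iff, Zbar_eq_iff]
      constructor
      · rintro ⟨hy, hz, hrest⟩
        exact ⟨hz i (Finset.mem_insert_self i S), hy,
          fun j hj => hz j (Finset.mem_insert_of_mem hj), hrest⟩
      · rintro ⟨hzi, hy, hz, hrest⟩
        refine ⟨hy, fun j hj => ?_, hrest⟩
        rcases Finset.mem_insert.mp hj with h | h
        · subst h; exact hzi
        · exact hz j h
    rw [step1]
    rw [Hent_pairZ p' q hp'0 hq0 hq1 i
      (fun ω => ((Ybar T ω, Zbar S ω, ZbarV H ω)))
      (by
        intro ω ω' h1 h2 h3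
        have hy : Ybar T ω = Ybar T ω' := funext fun j => by
          show ω.1 j.1 = ω'.1 j.1; rw [h1]
        have hz : Zbar S ω = Zbar S ω' := funext fun j => by
          show ω.2.1 j.1 = ω'.2.1 j.1
          exact h3 j.1 (fun hij => hiS (hij ▸ j.2))
        have hzv : ZbarV H ω = ZbarV H ω' := by
          rw [ZbarV_eq_iff]
          exact ⟨fun j hj => h3 j (fun hij => (hTH i hiT) (hij ▸ hj)), h2⟩
        show ((Ybar T ω, Zbar S ω, ZbarV H ω) :
            (∀ j : T, 𝒴 j.1) × (∀ j : S, 𝒵 j.1) × ((∀ j : H, 𝒵 j.1) × V))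
          = (Ybar T ω', Zbar S ω', ZbarV H ω')
        rw [hy, hz, hzv])
      (by
        intro ω ω' h
        have hy : Ybar T ω = Ybar T ω' := (Prod.ext_iff.mp h).1
        exact congrFun hy (⟨i, hiT⟩ : {x // x ∈ T}))]
    rw [ih hST]
    ring

def gEnt (k : ℕ) : ℝ :=
  Hent (Pjoint p' q) (ZbarV (Finset.univ.filter fun j : Fin M' => (j : ℕ) < k))

end Aux

/-- Corollary B.6 (cor:chain3) of the paper: for `1 ≤ m < M'` (0-indexed, the tail set is
`{i : m ≤ (i:ℕ)}` and the head set `{i : (i:ℕ) < m}`),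
`I(Ȳ_{{m+1,…,M'}}; Z̄_{{m+1,…,M'}} | Z̄_{{1,…,m}}, V)
  = Σ_{i=m+1}^{M'} I(Y_i; Z_i | Z̄_{{1,…,i−1}}, V)`. -/
theorem statement_8 (M' : ℕ) (𝒴 𝒵 : Fin M' → Type) [∀ i, Fintype (𝒴 i)]
    [∀ i, Fintype (𝒵 i)] (V : Type) [Fintype V]
    (p' : (∀ i, 𝒴 i) × V → ℝ) (q : ∀ m, 𝒴 m → 𝒵 m → ℝ)
    (hp'0 : ∀ yv, 0 ≤ p' yv) (hp'1 : ∑ yv, p' yv = 1)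
    (hq0 : ∀ m y z, 0 ≤ q m y z) (hq1 : ∀ m y, ∑ z, q m y z = 1)
    (m : ℕ) (hm1 : 1 ≤ m) (hm2 : m < M') :
    condMI (Pjoint p' q)
        (Ybar (Finset.univ.filter fun i : Fin M' => m ≤ (i : ℕ)))
        (Zbar (Finset.univ.filter fun i : Fin M' => m ≤ (i : ℕ)))
        (ZbarV (Finset.univ.filter fun i : Fin M' => (i : ℕ) < m))
      = ∑ i ∈ Finset.univ.filter (fun i : Fin M' => m ≤ (i : ℕ)),
          condMI (Pjoint p' q)
            (fun ω : Samp 𝒴 𝒵 V => ω.1 i)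
            (fun ω : Samp 𝒴 𝒵 V => ω.2.1 i)
            (ZbarV (Finset.univ.filter fun j : Fin M' => j < i)) := by
  classical
  have hM0 : (0:ℕ) < M' := lt_of_le_of_lt (Nat.zero_le m) hm2
  set T : Finset (Fin M') := Finset.univ.filter (fun i : Fin M' => m ≤ (i : ℕ)) with hTdef
  set Hd : Finset (Fin M') := Finset.univ.filter (fun i : Fin M' => (i : ℕ) < m) with hHdef
  have hTH : ∀ i ∈ T, i ∉ Hd := by
    intro i hi hiH
    rw [hTdef, Finset.mem_filter] at hi
    rw [hHdef, Finset.mem_filter] at hiH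
    omega
  -- LHS
  have hA2 : Hent (Pjoint p' q) (fun ω : Samp 𝒴 𝒵 V => (Zbar T ω, ZbarV Hd ω))
      = gEnt p' q M' := by
    refine Hent_congr _ _ _ fun ω₁ ω₂ => ?_
    show _ ↔ ZbarV (Finset.univ.filter fun j : Fin M' => (j : ℕ) < M') ω₁
      = ZbarV (Finset.univ.filter fun j : Fin M' => (j : ℕ) < M') ω₂
    simp only [Prod.ext_iff, Zbar_eq_iff, ZbarV_fst_eq_iff, ZbarV_snd]
    constructor
    · rintro ⟨hzT, hzH, hv⟩
      refine ⟨fun j hj => ?_, hv⟩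
      rcases le_or_gt m (j : ℕ) with h | h
      · exact hzT j (by rw [hTdef, Finset.mem_filter]; exact ⟨Finset.mem_univ j, h⟩)
      · exact hzH j (by rw [hHdef, Finset.mem_filter]; exact ⟨Finset.mem_univ j, h⟩)
    · rintro ⟨hz, hv⟩
      have hall : ∀ j : Fin M', ω₁.2.1 j = ω₂.2.1 j := fun j =>
        hz j (by rw [Finset.mem_filter]; exact ⟨Finset.mem_univ j, j.isLt⟩)
      exact ⟨fun j _ => hall j, fun j _ => hall j, hv⟩
  have hA3 := Hchain p' q hp'0 hq0 hq1 T Hd hTH T (le_refl T)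
  have hA4 : Hent (Pjoint p' q) (ZbarV Hd : Samp 𝒴 𝒵 V → _) = gEnt p' q m := rfl
  -- RHS pointwise
  have hBi : ∀ i ∈ T,
      condMI (Pjoint p' q) (fun ω : Samp 𝒴 𝒵 V => ω.1 i)
        (fun ω : Samp 𝒴 𝒵 V => ω.2.1 i)
        (ZbarV (Finset.univ.filter fun j : Fin M' => j < i))
      = gEnt p' q ((i : ℕ) + 1) - gEnt p' q (i : ℕ) - cC p' q i := by
    intro i hi
    have hLk : (Finset.univ.filter fun j : Fin M' => j < i)
        = (Finset.univ.filter fun j : Fin M' => (j : ℕ) < (i : ℕ)) := by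
      exact Finset.filter_congr fun j _ => Fin.lt_def
    rw [hLk]
    set L : Finset (Fin M') := Finset.univ.filter fun j : Fin M' => (j : ℕ) < (i : ℕ)
      with hLdef
    have hiL : i ∉ L := by rw [hLdef, Finset.mem_filter]; simp
    rw [condMI]
    have hB2 : Hent (Pjoint p' q) (fun ω : Samp 𝒴 𝒵 V => (ω.2.1 i, ZbarV L ω))
        = gEnt p' q ((i : ℕ) + 1) := by
      refine Hent_congr _ _ _ fun ω₁ ω₂ => ?_
      show _ ↔ ZbarV (Finset.univ.filter fun j : Fin M' => (j : ℕ) < (i : ℕ) + 1) ω₁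
        = ZbarV (Finset.univ.filter fun j : Fin M' => (j : ℕ) < (i : ℕ) + 1) ω₂
      simp only [Prod.ext_iff, ZbarV_fst_eq_iff, ZbarV_snd]
      constructor
      · rintro ⟨hzi, hz, hv⟩
        refine ⟨fun j hj => ?_, hv⟩
        rw [Finset.mem_filter] at hj
        rcases Nat.lt_succ_iff_lt_or_eq.mp hj.2 with h | h
        · exact hz j (by rw [hLdef, Finset.mem_filter]; exact ⟨Finset.mem_univ j, h⟩)
        · have : j = i := Fin.ext h
          subst this; exact hzi
      · rintro ⟨hz, hv⟩
        refine ⟨hz i (by rw [Finset.mem_filter]; exact ⟨Finset.mem_univ i, by omega⟩),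
          fun j hj => ?_, hv⟩
        rw [hLdef, Finset.mem_filter] at hj
        exact hz j (by rw [Finset.mem_filter]; exact ⟨Finset.mem_univ j, by omega⟩)
    have hB3 : Hent (Pjoint p' q)
        (fun ω : Samp 𝒴 𝒵 V => (ω.1 i, ω.2.1 i, ZbarV L ω))
        = Hent (Pjoint p' q) (fun ω : Samp 𝒴 𝒵 V => (ω.1 i, ZbarV L ω)) + cC p' q i := by
      have hrel : Hent (Pjoint p' q)
          (fun ω : Samp 𝒴 𝒵 V => (ω.1 i, ω.2.1 i, ZbarV L ω))
          = Hent (Pjoint p' q)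
            (fun ω : Samp 𝒴 𝒵 V => (ω.2.1 i, (ω.1 i, ZbarV L ω))) := by
        refine Hent_congr _ _ _ fun ω₁ ω₂ => ?_
        simp only [Prod.ext_iff]
        tauto
      rw [hrel]
      exact Hent_pairZ p' q hp'0 hq0 hq1 i (fun ω => (ω.1 i, ZbarV L ω))
        (by
          intro ω ω' h1 h2 h3
          have hzv : ZbarV L ω = ZbarV L ω' := by
            rw [ZbarV_eq_iff]
            exact ⟨fun j hj => h3 j (fun hij => hiL (hij ▸ hj)), h2⟩
          show ((ω.1 i, ZbarV L ω) : 𝒴 i × ((∀ j : L, 𝒵 j.1) × V)) = (ω'.1 i, ZbarV L ω')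
          rw [h1, hzv])
        (by
          intro ω ω' h
          exact (Prod.ext_iff.mp h).1)
    have hB4 : Hent (Pjoint p' q) (ZbarV L : Samp 𝒴 𝒵 V → _) = gEnt p' q (i : ℕ) := rfl
    rw [hB2, hB3, hB4]
    ring
  rw [Finset.sum_congr rfl hBi]
  -- telescoping
  have hsplit : ∑ i ∈ T, (gEnt p' q ((i : ℕ) + 1) - gEnt p' q (i : ℕ) - cC p' q i)
      = (∑ i ∈ T, (gEnt p' q ((i : ℕ) + 1) - gEnt p' q (i : ℕ))) - ∑ i ∈ T, cC p' q i := by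
    rw [← Finset.sum_sub_distrib]
  have htel : ∑ i ∈ T, (gEnt p' q ((i : ℕ) + 1) - gEnt p' q (i : ℕ))
      = gEnt p' q M' - gEnt p' q m := by
    have hmap : ∑ i ∈ T, (gEnt p' q ((i : ℕ) + 1) - gEnt p' q (i : ℕ))
        = ∑ k ∈ Finset.Ico m M', (gEnt p' q (k + 1) - gEnt p' q k) := by
      refine Finset.sum_nbij' (fun a => (a : ℕ))
        (fun k => (⟨k % M', Nat.mod_lt k hM0⟩ : Fin M')) ?_ ?_ ?_ ?_ ?_
      · intro a ha
        rw [hTdef, Finset.mem_filter] at ha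
        rw [Finset.mem_Ico]
        exact ⟨ha.2, a.isLt⟩
      · intro k hk
        rw [Finset.mem_Ico] at hk
        rw [hTdef, Finset.mem_filter]
        refine ⟨Finset.mem_univ _, ?_⟩
        show m ≤ k % M'
        rw [Nat.mod_eq_of_lt hk.2]
        exact hk.1
      · intro a ha
        exact Fin.ext (by simp [Nat.mod_eq_of_lt a.isLt])
      · intro k hk
        rw [Finset.mem_Ico] at hk
        show k % M' = k
        exact Nat.mod_eq_of_lt hk.2
      · intro a ha
        rfl
    rw [hmap, Finset.sum_Ico_eq_sub _ hm2.le, Finset.sum_range_sub (fun k => gEnt p' q k),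
      Finset.sum_range_sub (fun k => gEnt p' q k)]
    ring
  rw [hsplit, htel]
  rw [condMI, hA2, hA3, hA4]
  ring
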